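/- Let X ⊆ ℝ^d be a convex, compact set with nonempty interior, let F : X → ℝ^d be Borel measurable and bounded, and let δ > 0. For x ∈ X let B_δ(x) denote the closed Euclidean ball of radius δ centered at x and let |·| denote d-dimensional Lebesgue measure. Then |B_δ(x) ∩ X| > 0 for every x ∈ X, and the map F̂_δ : X → ℝ^d defined by F̂_δ(x) = (1 / |B_δ(x) ∩ X|) ∫_{B_δ(x) ∩ X} F(y) dy is continuous on X. -/

import Mathlib

open MeasureTheory Metric Set Filter Topology

private lemma avg_diff_subset {d : ℕ} (X : Set (EuclideanSpace ℝ (Fin d)))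
    (δ : ℝ) (x y : EuclideanSpace ℝ (Fin d)) :
    ((closedBall y δ ∩ X) \ (closedBall x δ ∩ X)) ∪ ((closedBall x δ ∩ X) \ (closedBall y δ ∩ X))
      ⊆ closedBall x (δ + dist y x) \ ball x (δ - dist y x) := by
  have hd : (0:ℝ) ≤ dist y x := dist_nonneg
  rintro u (⟨⟨huy, huX⟩, hu⟩ | ⟨⟨hux, huX⟩, hu⟩)
  · have hux : u ∉ closedBall x δ := fun h => hu ⟨h, huX⟩
    simp only [mem_closedBall, not_le] at hux huy
    have htri : dist u x ≤ dist u y + dist y x := dist_triangle _ _ _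
    refine ⟨by simp only [mem_closedBall]; linarith, ?_⟩
    simp only [mem_ball, not_lt]
    linarith
  · have huy : u ∉ closedBall y δ := fun h => hu ⟨h, huX⟩
    simp only [mem_closedBall, not_le] at hux huy
    have htri : dist u y ≤ dist u x + dist x y := dist_triangle _ _ _
    rw [dist_comm x y] at htri
    refine ⟨by simp only [mem_closedBall]; linarith, ?_⟩
    simp only [mem_ball, not_lt]
    linarith

private lemma annulus_measure {d : ℕ} (hd : 0 < d) (x : EuclideanSpace ℝ (Fin d)) {δ r : ℝ}
    (hr : 0 ≤ r) (hrδ : r ≤ δ) :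
    (volume (closedBall x (δ + r) \ ball x (δ - r))).toReal ≤
      ((δ + r) ^ d - (δ - r) ^ d) * (volume (ball (0 : EuclideanSpace ℝ (Fin d)) 1)).toReal := by
  haveI : Nontrivial (EuclideanSpace ℝ (Fin d)) := by
    apply Module.nontrivial_of_finrank_pos (R := ℝ)
    rw [finrank_euclideanSpace_fin]; exact hd
  have hsub : ball x (δ - r) ⊆ closedBall x (δ + r) :=
    ball_subset_closedBall.trans (closedBall_subset_closedBall (by linarith))
  rw [measure_diff hsub measurableSet_ball.nullMeasurableSet measure_ball_lt_top.ne,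
    ENNReal.toReal_sub_of_le (measure_mono hsub) measure_closedBall_lt_top.ne,
    Measure.addHaar_closedBall volume x (by linarith), Measure.addHaar_ball volume x (by linarith),
    finrank_euclideanSpace_fin, ENNReal.toReal_mul, ENNReal.toReal_mul,
    ENNReal.toReal_ofReal (pow_nonneg (by linarith) d), ENNReal.toReal_ofReal (pow_nonneg (by linarith) d)]
  exact le_of_eq (by ring)

private lemma avg_pos {d : ℕ} {X : Set (EuclideanSpace ℝ (Fin d))} (hXconv : Convex ℝ X)
    (hXint : (interior X).Nonempty) {δ : ℝ} (hδ : 0 < δ)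
    {x : EuclideanSpace ℝ (Fin d)} (hx : x ∈ X) :
    0 < volume (closedBall x δ ∩ X) := by
  obtain ⟨z, hz⟩ := hXint
  have hdzx : (0:ℝ) ≤ dist z x := dist_nonneg
  set t : ℝ := δ / (δ + dist z x) with ht_def
  have ht0 : 0 < t := div_pos hδ (by linarith)
  set w := t • z + (1 - t) • x with hw_def
  have ht1 : t ≤ 1 := by
    rw [ht_def, div_le_one (by linarith)]; linarith
  have hw : w ∈ interior X :=
    hXconv.combo_interior_self_mem_interior hz hx ht0 (by linarith) (by ring)
  have hdist : dist w x = t * dist z x := by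
    rw [dist_eq_norm]
    have hwx : w - x = t • (z - x) := by rw [hw_def]; module
    rw [hwx, norm_smul, Real.norm_eq_abs, abs_of_pos ht0, ← dist_eq_norm]
  have hdlt : dist w x < δ := by
    rw [hdist, ht_def, div_mul_eq_mul_div, div_lt_iff₀ (by linarith)]
    nlinarith
  obtain ⟨ε, hε0, hεsub⟩ := Metric.isOpen_iff.mp isOpen_interior w hw
  have hε'0 : 0 < min ε (δ - dist w x) := lt_min hε0 (by linarith)
  have hsub : ball w (min ε (δ - dist w x)) ⊆ closedBall x δ ∩ X := by
    intro u hu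
    rw [mem_ball] at hu
    have h1 : dist u w < δ - dist w x := lt_of_lt_of_le hu (min_le_right _ _)
    have h2 : dist u x ≤ dist u w + dist w x := dist_triangle _ _ _
    exact ⟨by rw [mem_closedBall]; linarith,
      interior_subset (hεsub (mem_ball.mpr (lt_of_lt_of_le hu (min_le_left _ _))))⟩
  exact lt_of_lt_of_le (measure_ball_pos volume w hε'0) (measure_mono hsub)

/-- **Continuity of the local average of `F`** (Lemma `cont`):
If `X ⊆ ℝ^d` is convex and compact with nonempty interior and `F` is Borel measurable and
bounded on `X`, then for every `δ > 0` each set `B_δ(x) ∩ X` (for `x ∈ X`) has positive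
Lebesgue measure, and the local-average map
`F̂_δ : x ↦ (1 / |B_δ(x) ∩ X|) ∫_{B_δ(x) ∩ X} F(y) dy` is continuous on `X`. -/
theorem local_average_continuous {d : ℕ} (X : Set (EuclideanSpace ℝ (Fin d)))
    (hXconv : Convex ℝ X) (hXcomp : IsCompact X) (hXint : (interior X).Nonempty)
    (F : EuclideanSpace ℝ (Fin d) → EuclideanSpace ℝ (Fin d))
    (hFmeas : Measurable F)
    (B : ℝ) (hFbd : ∀ x ∈ X, ‖F x‖ ≤ B)
    (δ : ℝ) (hδ : 0 < δ) :
    (∀ x ∈ X, 0 < volume (Metric.closedBall x δ ∩ X)) ∧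
    ContinuousOn
      (fun x => (volume (Metric.closedBall x δ ∩ X)).toReal⁻¹ •
        ∫ y in Metric.closedBall x δ ∩ X, F y) X := by
  have hXmeas : MeasurableSet X := hXcomp.isClosed.measurableSet
  have hpos : ∀ x ∈ X, 0 < volume (Metric.closedBall x δ ∩ X) :=
    fun x hx => avg_pos hXconv hXint hδ hx
  refine ⟨hpos, ?_⟩
  rcases Nat.eq_zero_or_pos d with hd | hd
  · -- degenerate case: the space is a subsingleton, every map is "constant"
    subst hd
    have hconst : (fun x => (volume (Metric.closedBall x δ ∩ X)).toReal⁻¹ •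
          ∫ y in Metric.closedBall x δ ∩ X, F y)
        = fun _ => (volume (Metric.closedBall (0 : EuclideanSpace ℝ (Fin 0)) δ ∩ X)).toReal⁻¹ •
          ∫ y in Metric.closedBall (0 : EuclideanSpace ℝ (Fin 0)) δ ∩ X, F y := by
      funext y
      rw [Subsingleton.elim y (0 : EuclideanSpace ℝ (Fin 0))]
    rw [hconst]
    exact continuousOn_const
  -- main case
  set S : EuclideanSpace ℝ (Fin d) → Set (EuclideanSpace ℝ (Fin d)) :=
    fun y => Metric.closedBall y δ ∩ X with hS
  have hSmeas : ∀ y, MeasurableSet (S y) := fun y => measurableSet_closedBall.inter hXmeas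
  have hSfin : ∀ y, volume (S y) ≠ ⊤ := fun y =>
    (lt_of_le_of_lt (measure_mono inter_subset_left) measure_closedBall_lt_top).ne
  set c := (volume (ball (0 : EuclideanSpace ℝ (Fin d)) 1)).toReal with hc
  set a : ℝ → ℝ := fun r => ((δ + r) ^ d - (δ - r) ^ d) * c with ha
  obtain ⟨x₀, hx₀⟩ : X.Nonempty := ⟨hXint.choose, interior_subset hXint.choose_spec⟩
  have hB0 : 0 ≤ B := le_trans (norm_nonneg _) (hFbd x₀ hx₀)
  have hInt : ∀ y, IntegrableOn F (S y) volume := by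
    intro y
    refine Measure.integrableOn_of_bounded (hSfin y) hFmeas.aestronglyMeasurable
      (M := B) (ae_restrict_of_forall_mem (hSmeas y) fun u hu => hFbd u hu.2)
  intro x hx
  apply ContinuousAt.continuousWithinAt
  have key : ∀ y, dist y x ≤ δ →
      (volume (S y \ S x)).toReal ≤ a (dist y x) ∧
      (volume (S x \ S y)).toReal ≤ a (dist y x) := by
    intro y h1
    have hann := annulus_measure hd x dist_nonneg h1
    have hsub := avg_diff_subset X δ x y
    have hfin : volume (closedBall x (δ + dist y x) \ ball x (δ - dist y x)) ≠ ⊤ :=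
      (lt_of_le_of_lt (measure_mono diff_subset) measure_closedBall_lt_top).ne
    constructor
    · exact le_trans (ENNReal.toReal_mono hfin
        (measure_mono (subset_union_left.trans hsub))) hann
    · exact le_trans (ENNReal.toReal_mono hfin
        (measure_mono (subset_union_right.trans hsub))) hann
  have haT : Tendsto (fun y => a (dist y x)) (𝓝 x) (𝓝 0) := by
    have hca : Continuous fun y : EuclideanSpace ℝ (Fin d) => a (dist y x) := by
      rw [ha]
      exact (((continuous_const.add (continuous_id.dist continuous_const)).pow d).sub
        ((continuous_const.sub (continuous_id.dist continuous_const)).pow d)).mul continuous_const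
    have h0 : a 0 = 0 := by simp [ha]
    simpa [h0] using hca.tendsto x
  have hev : ∀ᶠ y in 𝓝 x, dist y x ≤ δ := by
    filter_upwards [Metric.closedBall_mem_nhds x hδ] with y hy
    rwa [mem_closedBall] at hy
  -- continuity of the measure
  have hg : Tendsto (fun y => (volume (S y)).toReal) (𝓝 x) (𝓝 (volume (S x)).toReal) := by
    rw [tendsto_iff_dist_tendsto_zero]
    apply squeeze_zero' (Eventually.of_forall fun y => dist_nonneg) ?_ haT
    filter_upwards [hev] with y hy
    obtain ⟨k1, k2⟩ := key y hy
    have hine : ∀ u v : Set (EuclideanSpace ℝ (Fin d)), volume u ≠ ⊤ → volume v ≠ ⊤ →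
        (volume u).toReal ≤ (volume v).toReal + (volume (u \ v)).toReal := by
      intro u v hu hv
      have hdfin : volume (u \ v) ≠ ⊤ :=
        (lt_of_le_of_lt (measure_mono diff_subset) hu.lt_top).ne
      have h1 : volume u ≤ volume v + volume (u \ v) := by
        calc volume u ≤ volume (v ∪ u \ v) := measure_mono (by
              intro z hz
              by_cases hzv : z ∈ v
              · exact Or.inl hzv
              · exact Or.inr ⟨hz, hzv⟩)
          _ ≤ volume v + volume (u \ v) := measure_union_le _ _
      calc (volume u).toReal ≤ (volume v + volume (u \ v)).toReal :=
            ENNReal.toReal_mono (ENNReal.add_ne_top.mpr ⟨hv, hdfin⟩) h1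
        _ = (volume v).toReal + (volume (u \ v)).toReal :=
            ENNReal.toReal_add hv hdfin
    have h1 := hine (S y) (S x) (hSfin y) (hSfin x)
    have h2 := hine (S x) (S y) (hSfin x) (hSfin y)
    rw [Real.dist_eq, abs_sub_le_iff]
    constructor <;> linarith
  -- continuity of the integral
  have hI : Tendsto (fun y => ∫ u in S y, F u) (𝓝 x) (𝓝 (∫ u in S x, F u)) := by
    rw [tendsto_iff_norm_sub_tendsto_zero]
    have hlim : Tendsto (fun y => 2 * B * a (dist y x)) (𝓝 x) (𝓝 0) := by
      simpa using haT.const_mul (2 * B)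
    apply squeeze_zero' (Eventually.of_forall fun y => norm_nonneg _) ?_ hlim
    filter_upwards [hev] with y hy
    obtain ⟨k1, k2⟩ := key y hy
    have hdecy : ∫ u in S y, F u = (∫ u in S y ∩ S x, F u) + ∫ u in S y \ S x, F u := by
      rw [← setIntegral_union (disjoint_sdiff_right.mono_left inter_subset_right)
        ((hSmeas y).diff (hSmeas x)) ((hInt y).mono_set inter_subset_left)
        ((hInt y).mono_set diff_subset), inter_union_diff]
    have hdecx : ∫ u in S x, F u = (∫ u in S y ∩ S x, F u) + ∫ u in S x \ S y, F u := by
      rw [inter_comm, ← setIntegral_union (disjoint_sdiff_right.mono_left inter_subset_right)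
        ((hSmeas x).diff (hSmeas y)) ((hInt x).mono_set inter_subset_left)
        ((hInt x).mono_set diff_subset), inter_union_diff]
    have hb1 : ‖∫ u in S y \ S x, F u‖ ≤ B * (volume (S y \ S x)).toReal :=
      norm_setIntegral_le_of_norm_le_const
        (lt_of_le_of_lt (measure_mono diff_subset) (hSfin y).lt_top)
        (fun u hu => hFbd u hu.1.2)
    have hb2 : ‖∫ u in S x \ S y, F u‖ ≤ B * (volume (S x \ S y)).toReal :=
      norm_setIntegral_le_of_norm_le_const
        (lt_of_le_of_lt (measure_mono diff_subset) (hSfin x).lt_top)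
        (fun u hu => hFbd u hu.1.2)
    have hnn1 : (0:ℝ) ≤ (volume (S y \ S x)).toReal := ENNReal.toReal_nonneg
    calc ‖(∫ u in S y, F u) - ∫ u in S x, F u‖
        = ‖(∫ u in S y \ S x, F u) - ∫ u in S x \ S y, F u‖ := by
          rw [hdecy, hdecx]; congr 1; abel
      _ ≤ ‖∫ u in S y \ S x, F u‖ + ‖∫ u in S x \ S y, F u‖ := norm_sub_le _ _
      _ ≤ B * (volume (S y \ S x)).toReal + B * (volume (S x \ S y)).toReal :=
          add_le_add hb1 hb2
      _ ≤ 2 * B * a (dist y x) := by nlinarith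
  have hgx : 0 < (volume (S x)).toReal :=
    ENNReal.toReal_pos (hpos x hx).ne' (hSfin x)
  exact (hg.inv₀ hgx.ne').smul hI
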